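/- Let a = −7/8 + i·√15/8. The 15×15 complex matrix U₁₅, with rows and columns indexed by the nonzero vectors of the vector space F₂⁴ over the two-element field, defined by (U₁₅)_{x,y} = 1 if the standard bilinear form x·y = x₁y₁ + x₂y₂ + x₃y₃ + x₄y₄ equals 0 in F₂, and (U₁₅)_{x,y} = a if x·y = 1, is a complex Hadamard matrix of order 15. -/

import Mathlib

open Matrix Finset

/-- `H` is a complex Hadamard matrix: unimodular entries and `H Hᴴ = n • I`. -/
def IsCHadamard {n : Type*} [Fintype n] [DecidableEq n] (H : Matrix n n ℂ) : Prop :=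
  (∀ i j, ‖H i j‖ = 1) ∧
    H * H.conjTranspose = (Fintype.card n : ℂ) • 1

/-- The nonzero vectors of `F₂⁴`. -/
abbrev V15 : Type := {x : Fin 4 → ZMod 2 // x ≠ 0}

lemma counts15 : ∀ x x' : V15, ∀ b b' : ZMod 2,
    (Finset.univ.filter (fun y : V15 => (∑ i, x.1 i * y.1 i = b) ∧ (∑ i, x'.1 i * y.1 i = b'))).card
    = if x = x' then (if b = b' then (if b = 0 then 7 else 8) else 0)
      else (if b = 0 ∧ b' = 0 then 3 else 4) := by decide

lemma zmod2_ne_zero : ∀ z : ZMod 2, ¬ z = 0 ↔ z = 1 := by decide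

lemma ite_prod_split {p q : Prop} [Decidable p] [Decidable q] (c d : ℂ) :
    (if p then 1 else c) * (if q then 1 else d)
      = (if p ∧ q then 1 else 0) + (if p ∧ ¬q then d else 0)
        + (if ¬p ∧ q then c else 0) + (if ¬p ∧ ¬q then c*d else 0) := by
  by_cases hp : p <;> by_cases hq : q <;> simp [hp, hq]

theorem stmt17 (a : ℂ) (ha : a = -7/8 + Complex.I * (Real.sqrt 15 / 8)) :
    IsCHadamard (Matrix.of fun x y : V15 =>
      if ∑ i, x.1 i * y.1 i = 0 then (1 : ℂ) else a) := by
  have hre : a.re = -7/8 := by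
    simp [ha, Complex.add_re, Complex.mul_re]
  have him : a.im = Real.sqrt 15 / 8 := by
    simp [ha, Complex.add_im, Complex.mul_im]
  have habs2 : Complex.normSq a = 1 := by
    have h15 : Real.sqrt 15 * Real.sqrt 15 = 15 := Real.mul_self_sqrt (by norm_num)
    rw [Complex.normSq_apply, hre, him]
    nlinarith [h15]
  have hmulconj : a * (starRingEnd ℂ) a = 1 := by
    rw [Complex.mul_conj, habs2]; norm_num
  have hsum : a + (starRingEnd ℂ) a = -7/4 := by
    rw [Complex.add_conj, hre]
    push_cast; ring
  constructor
  · intro i j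
    simp only [Matrix.of_apply]
    split
    · simp
    · rw [Complex.norm_def, habs2, Real.sqrt_one]
  · ext x x'
    rw [Matrix.mul_apply]
    simp only [Matrix.conjTranspose_apply, Matrix.of_apply, Matrix.smul_apply,
      Matrix.one_apply, smul_eq_mul]
    have hcard : (Fintype.card V15 : ℂ) = 15 := by norm_num [show Fintype.card V15 = 15 by decide]
    rw [hcard, mul_ite, mul_one, mul_zero]
    calc ∑ y : V15, (if ∑ i, x.1 i * y.1 i = 0 then (1:ℂ) else a) *
            (starRingEnd ℂ) (if ∑ i, x'.1 i * y.1 i = 0 then (1:ℂ) else a)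
        = ∑ y : V15, ((if (∑ i, x.1 i * y.1 i = 0) ∧ (∑ i, x'.1 i * y.1 i = 0) then (1:ℂ) else 0)
            + (if (∑ i, x.1 i * y.1 i = 0) ∧ (∑ i, x'.1 i * y.1 i = 1) then (starRingEnd ℂ) a else 0)
            + (if (∑ i, x.1 i * y.1 i = 1) ∧ (∑ i, x'.1 i * y.1 i = 0) then a else 0)
            + (if (∑ i, x.1 i * y.1 i = 1) ∧ (∑ i, x'.1 i * y.1 i = 1) then a * (starRingEnd ℂ) a else 0)) := by
          refine Finset.sum_congr rfl fun y _ => ?_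
          rw [apply_ite (starRingEnd ℂ), _root_.map_one, ite_prod_split]
          simp only [zmod2_ne_zero]
      _ = ((univ.filter (fun y : V15 => (∑ i, x.1 i * y.1 i = 0) ∧ (∑ i, x'.1 i * y.1 i = 0))).card : ℂ) * 1
            + ((univ.filter (fun y : V15 => (∑ i, x.1 i * y.1 i = 0) ∧ (∑ i, x'.1 i * y.1 i = 1))).card : ℂ) * (starRingEnd ℂ) a
            + ((univ.filter (fun y : V15 => (∑ i, x.1 i * y.1 i = 1) ∧ (∑ i, x'.1 i * y.1 i = 0))).card : ℂ) * a
            + ((univ.filter (fun y : V15 => (∑ i, x.1 i * y.1 i = 1) ∧ (∑ i, x'.1 i * y.1 i = 1))).card : ℂ) * (a * (starRingEnd ℂ) a) := by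
          simp only [Finset.sum_add_distrib, ← Finset.sum_filter, Finset.sum_const,
            nsmul_eq_mul]
      _ = if x = x' then (15:ℂ) else 0 := by
          rw [counts15 x x' 0 0, counts15 x x' 0 1, counts15 x x' 1 0, counts15 x x' 1 1]
          by_cases hxx : x = x'
          · simp only [hxx, if_pos rfl]
            norm_num [hmulconj]
          · simp only [if_neg hxx]
            norm_num
            linear_combination (4:ℂ) * hsum + 4 * hmulconj
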